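/- Let p_e(ρ) = a ρ^γ with a > 0 and γ > 2, and define the relative pressure p_e(ρ|ρ̄) = p_e(ρ) − p_e(ρ̄) − p_e'(ρ̄)(ρ − ρ̄). Then for any fixed ρ̄ > 0 there exists a constant C > 0 such that |ρ − ρ̄|² ≤ C · p_e(ρ|ρ̄) for all ρ ≥ 0. -/

import Mathlib

open Set Real

/-- for p_e(ρ) = aρ^γ with a > 0, γ > 2 and fixed ρ̄ > 0, the relative
pressure dominates the squared distance: |ρ − ρ̄|² ≤ C·p_e(ρ|ρ̄) for all ρ ≥ 0. -/
theorem stmt6 (a γ ρb : ℝ) (ha : 0 < a) (hγ : 2 < γ) (hρb : 0 < ρb) :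
    ∃ C > 0, ∀ ρ : ℝ, 0 ≤ ρ →
      (ρ - ρb) ^ 2 ≤
        C * (a * ρ ^ γ - a * ρb ^ γ - a * γ * ρb ^ (γ - 1) * (ρ - ρb)) := by
  have hγ0 : (0:ℝ) < γ := by linarith
  have hk : 0 < γ * ρb ^ (γ - 2) := mul_pos hγ0 (rpow_pos_of_pos hρb _)
  refine ⟨2 / (a * (γ * ρb ^ (γ - 2))), by positivity, ?_⟩
  intro ρ hρ
  set D : ℝ → ℝ := fun x => x ^ γ - ρb ^ γ - γ * ρb ^ (γ - 1) * (x - ρb)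
      - γ * ρb ^ (γ - 2) / 2 * (x - ρb) ^ 2 with hDdef
  have hderiv : ∀ x : ℝ, HasDerivAt D
      (γ * x ^ (γ - 1) - γ * ρb ^ (γ - 1) - γ * ρb ^ (γ - 2) * (x - ρb)) x := by
    intro x
    have h1 : HasDerivAt (fun x : ℝ => x ^ γ) (γ * x ^ (γ - 1)) x :=
      Real.hasDerivAt_rpow_const (Or.inr (by linarith))
    have h2 : HasDerivAt (fun x : ℝ => γ * ρb ^ (γ - 1) * (x - ρb))
        (γ * ρb ^ (γ - 1)) x := by
      simpa using ((hasDerivAt_id x).sub_const ρb).const_mul (γ * ρb ^ (γ - 1))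
    have h3 : HasDerivAt (fun x : ℝ => γ * ρb ^ (γ - 2) / 2 * (x - ρb) ^ 2)
        (γ * ρb ^ (γ - 2) * (x - ρb)) x := by
      have := (((hasDerivAt_id x).sub_const ρb).pow 2).const_mul (γ * ρb ^ (γ - 2) / 2)
      refine this.congr_deriv ?_
      simp
      ring
    exact ((h1.sub_const (ρb ^ γ)).sub h2).sub h3
  have hcont : Continuous D :=
    Differentiable.continuous (fun x => (hderiv x).differentiableAt)
  -- split identity:  ρb^(γ-1) = ρb^(γ-2) * ρb
  have hsplit : ρb ^ (γ - 1) = ρb ^ (γ - 2) * ρb := by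
    rw [show γ - 1 = (γ - 2) + 1 by ring, rpow_add hρb, rpow_one]
  have hsplit' : ∀ x : ℝ, 0 < x → x ^ (γ - 1) = x ^ (γ - 2) * x := by
    intro x hx
    rw [show γ - 1 = (γ - 2) + 1 by ring, rpow_add hx, rpow_one]
  have hDρb : D ρb = 0 := by simp [hDdef]
  have hkey : 0 ≤ D ρ := by
    rcases le_or_gt ρ ρb with hle | hlt
    · have hanti : AntitoneOn D (Icc 0 ρb) := by
        apply antitoneOn_of_deriv_nonpos (convex_Icc 0 ρb) hcont.continuousOn
        · exact fun x hx => (hderiv x).differentiableAt.differentiableWithinAt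
        · intro x hx
          rw [interior_Icc] at hx
          rw [(hderiv x).deriv]
          have hx0 : 0 < x := hx.1
          have hxγ : x ^ (γ - 2) ≤ ρb ^ (γ - 2) :=
            rpow_le_rpow hx0.le hx.2.le (by linarith)
          have : x ^ (γ - 1) ≤ ρb ^ (γ - 2) * x := by
            rw [hsplit' x hx0]
            exact mul_le_mul_of_nonneg_right hxγ hx0.le
          rw [hsplit]
          nlinarith
      have := hanti ⟨hρ, hle⟩ ⟨hρb.le, le_refl ρb⟩ hle
      rwa [hDρb] at this
    · have hmono : MonotoneOn D (Ici ρb) := by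
        apply monotoneOn_of_deriv_nonneg (convex_Ici ρb) hcont.continuousOn
        · exact fun x hx => (hderiv x).differentiableAt.differentiableWithinAt
        · intro x hx
          rw [interior_Ici] at hx
          rw [(hderiv x).deriv]
          have hx0 : 0 < x := hρb.trans hx
          have hxγ : ρb ^ (γ - 2) ≤ x ^ (γ - 2) :=
            rpow_le_rpow hρb.le hx.le (by linarith)
          have : ρb ^ (γ - 2) * x ≤ x ^ (γ - 1) := by
            rw [hsplit' x hx0]
            exact mul_le_mul_of_nonneg_right hxγ hx0.le
          rw [hsplit]
          nlinarith
      have := hmono (self_mem_Ici) (mem_Ici.mpr hlt.le) hlt.le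
      rwa [hDρb] at this
  -- from 0 ≤ D ρ conclude
  have hE : γ * ρb ^ (γ - 2) / 2 * (ρ - ρb) ^ 2
      ≤ ρ ^ γ - ρb ^ γ - γ * ρb ^ (γ - 1) * (ρ - ρb) := by
    have := hkey
    simp only [hDdef] at this
    linarith
  have hCa : 2 / (a * (γ * ρb ^ (γ - 2))) *
      (a * ρ ^ γ - a * ρb ^ γ - a * γ * ρb ^ (γ - 1) * (ρ - ρb))
      = 2 / (γ * ρb ^ (γ - 2)) * (ρ ^ γ - ρb ^ γ - γ * ρb ^ (γ - 1) * (ρ - ρb)) := by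
    field_simp
  rw [hCa]
  have h2k : (0:ℝ) ≤ 2 / (γ * ρb ^ (γ - 2)) := by positivity
  calc (ρ - ρb) ^ 2
      = 2 / (γ * ρb ^ (γ - 2)) * (γ * ρb ^ (γ - 2) / 2 * (ρ - ρb) ^ 2) := by
        field_simp
    _ ≤ 2 / (γ * ρb ^ (γ - 2)) * (ρ ^ γ - ρb ^ γ - γ * ρb ^ (γ - 1) * (ρ - ρb)) :=
        mul_le_mul_of_nonneg_left hE h2k
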